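/- Let H : [0,∞) → ℝ be a differentiable function satisfying |H(z)| ≤ C·H'(z) for all z ≥ 0, with C > 0. Then either there exists z₀ ≥ 0 with H(z₀) > 0 and H(z) ≥ H(z₀)·exp((z−z₀)/C) for all z ≥ z₀, or H(z) ≤ 0 for all z ≥ 0 and −H(z) ≤ −H(0)·exp(−z/C) for all z ≥ 0. -/

import Mathlib

lemma pl_mono_aux (H : ℝ → ℝ) (a : ℝ)
    (hdiff : ∀ z, 0 ≤ z → DifferentiableAt ℝ H z)
    (h : ∀ z, 0 ≤ z → 0 ≤ deriv H z + a * H z) :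
    MonotoneOn (fun z => H z * Real.exp (a * z)) (Set.Ici 0) := by
  have hd : ∀ z ∈ Set.Ici (0:ℝ), HasDerivAt (fun z => H z * Real.exp (a * z))
      ((deriv H z + a * H z) * Real.exp (a * z)) z := by
    intro z hz
    have h1 : HasDerivAt H (deriv H z) z := (hdiff z hz).hasDerivAt
    have h2 : HasDerivAt (fun z => Real.exp (a * z)) (Real.exp (a * z) * a) z := by
      have := (Real.hasDerivAt_exp (a * z)).comp z ((hasDerivAt_id z).const_mul a)
      simpa [mul_comm, Function.comp_def] using this
    have := h1.mul h2
    exact this.congr_deriv (by ring)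
  apply monotoneOn_of_deriv_nonneg (convex_Ici 0)
  · exact fun z hz => ((hd z hz).continuousAt.continuousWithinAt)
  · intro z hz
    rw [interior_Ici] at hz
    exact (hd z (le_of_lt hz : (0:ℝ) ≤ z)).differentiableAt.differentiableWithinAt
  · intro z hz
    rw [interior_Ici] at hz
    rw [(hd z (le_of_lt hz : (0:ℝ) ≤ z)).deriv]
    exact mul_nonneg (h z (le_of_lt hz)) (Real.exp_pos _).le

/-- The full Phragmén–Lindelöf alternative: from `|H| ≤ C·H'` on `[0,∞)`,
either `H` eventually becomes positive and grows exponentially, or `H` stays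
nonpositive and `-H` decays exponentially. -/
theorem phragmen_lindelof_alternative (H : ℝ → ℝ) (C : ℝ) (hC : 0 < C)
    (hdiff : ∀ z, 0 ≤ z → DifferentiableAt ℝ H z)
    (hineq : ∀ z, 0 ≤ z → |H z| ≤ C * deriv H z) :
    (∃ z₀, 0 ≤ z₀ ∧ 0 < H z₀ ∧
        ∀ z, z₀ ≤ z → H z₀ * Real.exp ((z - z₀) / C) ≤ H z) ∨
      ((∀ z, 0 ≤ z → H z ≤ 0) ∧
        ∀ z, 0 ≤ z → -H z ≤ (-H 0) * Real.exp (-z / C)) := by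
  have mono1 : MonotoneOn (fun z => H z * Real.exp ((-1/C) * z)) (Set.Ici 0) := by
    apply pl_mono_aux H _ hdiff
    intro z hz
    have h1 : H z ≤ C * deriv H z := (le_abs_self _).trans (hineq z hz)
    have : H z / C ≤ deriv H z := (div_le_iff₀' hC).mpr h1
    have e : (-1/C) * H z = -(H z / C) := by ring
    linarith [this]
  have mono2 : MonotoneOn (fun z => H z * Real.exp ((1/C) * z)) (Set.Ici 0) := by
    apply pl_mono_aux H _ hdiff
    intro z hz
    have h1 : -H z ≤ C * deriv H z := (neg_le_abs _).trans (hineq z hz)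
    have : -H z / C ≤ deriv H z := (div_le_iff₀' hC).mpr h1
    have e : (1/C) * H z = -(-H z / C) := by ring
    linarith [this]
  by_cases hpos : ∃ z₀, 0 ≤ z₀ ∧ 0 < H z₀
  · obtain ⟨z₀, hz₀, hHz₀⟩ := hpos
    left
    refine ⟨z₀, hz₀, hHz₀, fun z hz => ?_⟩
    have hz' : (0:ℝ) ≤ z := hz₀.trans hz
    have := mono1 (Set.mem_Ici.mpr hz₀) (Set.mem_Ici.mpr hz') hz
    simp only at this
    -- this : H z₀ * exp (-1/C * z₀) ≤ H z * exp (-1/C * z)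
    have hkey : H z₀ * Real.exp ((-1/C) * z₀) * Real.exp (z/C) ≤
        H z * Real.exp ((-1/C) * z) * Real.exp (z/C) :=
      mul_le_mul_of_nonneg_right this (Real.exp_pos _).le
    rw [mul_assoc, mul_assoc, ← Real.exp_add, ← Real.exp_add] at hkey
    have e1 : (-1/C) * z₀ + z/C = (z - z₀)/C := by ring
    have e2 : (-1/C) * z + z/C = 0 := by ring
    rw [e1, e2, Real.exp_zero, mul_one] at hkey
    exact hkey
  · right
    push_neg at hpos
    have hnp : ∀ z, 0 ≤ z → H z ≤ 0 := fun z hz => hpos z hz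
    refine ⟨hnp, fun z hz => ?_⟩
    have := mono2 (Set.mem_Ici.mpr le_rfl) (Set.mem_Ici.mpr hz) hz
    simp only [mul_zero, Real.exp_zero, mul_one] at this
    -- this : H 0 ≤ H z * exp (1/C * z)
    have hkey : H 0 * Real.exp (-z/C) ≤ H z * Real.exp ((1/C) * z) * Real.exp (-z/C) :=
      mul_le_mul_of_nonneg_right this (Real.exp_pos _).le
    rw [mul_assoc, ← Real.exp_add] at hkey
    have e2 : (1/C) * z + -z/C = 0 := by ring
    rw [e2, Real.exp_zero, mul_one] at hkey
    linarith [hkey]
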